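/- For every integer g ≥ 2: √(4−2√2)·tanh(ς_g/8) < tanh(ς_g/4), where ς_g = 2·arcosh(1+2cos(π/(2g))). In fact √(4−2√2)·lim_{g→∞} tanh(ς_g/8) < tanh(ς₂/4), where the limit value of tanh(ς_g/8) is tanh(arcosh(3)/4). -/

import Mathlib

open Real

/-- Inverse hyperbolic cosine on `[1, ∞)`. -/
noncomputable def arcosh (x : ℝ) : ℝ := Real.log (x + Real.sqrt (x ^ 2 - 1))

private lemma tanh_eq2 (t : ℝ) :
    Real.tanh t = (Real.exp (2 * t) - 1) / (Real.exp (2 * t) + 1) := by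
  have h0 : (0:ℝ) < Real.exp t := Real.exp_pos t
  have h2 : Real.exp (2 * t) = Real.exp t * Real.exp t := by
    rw [two_mul, Real.exp_add]
  rw [Real.tanh_eq_sinh_div_cosh, Real.sinh_eq, Real.cosh_eq, Real.exp_neg, h2]
  have hd : (0:ℝ) < Real.exp t * Real.exp t + 1 := by positivity
  field_simp

private lemma tanh_lt_tanh' {a b : ℝ} (h : a < b) : Real.tanh a < Real.tanh b := by
  rw [tanh_eq2, tanh_eq2]
  have ha : (0:ℝ) < Real.exp (2 * a) := Real.exp_pos _
  have hb : (0:ℝ) < Real.exp (2 * b) := Real.exp_pos _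
  have hab : Real.exp (2 * a) < Real.exp (2 * b) := Real.exp_lt_exp.2 (by linarith)
  rw [div_lt_div_iff₀ (by linarith) (by linarith)]
  nlinarith

private lemma tanh_le_tanh' {a b : ℝ} (h : a ≤ b) : Real.tanh a ≤ Real.tanh b := by
  rcases eq_or_lt_of_le h with rfl | h
  · exact le_refl _
  · exact (tanh_lt_tanh' h).le

private lemma arcosh_lt_arcosh {x y : ℝ} (hx : 1 ≤ x) (hxy : x < y) :
    _root_.arcosh x < _root_.arcosh y := by
  unfold _root_.arcosh
  apply Real.log_lt_log (by positivity)
  have : Real.sqrt (x ^ 2 - 1) ≤ Real.sqrt (y ^ 2 - 1) :=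
    Real.sqrt_le_sqrt (by nlinarith)
  linarith

private lemma arcosh_le_arcosh {x y : ℝ} (hx : 1 ≤ x) (hxy : x ≤ y) :
    _root_.arcosh x ≤ _root_.arcosh y := by
  rcases eq_or_lt_of_le hxy with rfl | h
  · exact le_refl _
  · exact (_root_.arcosh_lt_arcosh hx h).le

set_option maxHeartbeats 800000 in
theorem circumradius_lt_quarter_systole (g : ℕ) (hg : 2 ≤ g) :
    Real.tanh (_root_.arcosh (1 + 2 * Real.cos (π / (2 * g))) / 4) / Real.cos (π / 8)
      < Real.tanh (_root_.arcosh (1 + 2 * Real.cos (π / (2 * g))) / 2) := by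
  have hπ := Real.pi_pos
  have hr : Real.sqrt 2 ^ 2 = 2 := Real.sq_sqrt (by norm_num)
  have hr0 : (0:ℝ) ≤ Real.sqrt 2 := Real.sqrt_nonneg 2
  have hr1 : (1:ℝ) < Real.sqrt 2 := by nlinarith
  have hr15 : Real.sqrt 2 < 3/2 := by nlinarith
  have hgr : (2:ℝ) ≤ (g:ℝ) := by exact_mod_cast hg
  have hgpos : (0:ℝ) < 2 * g := by linarith
  set c := Real.cos (π / (2 * g)) with hc
  -- bounds on c
  have hle : π / (2 * g) ≤ π / 4 := by
    apply div_le_div_of_nonneg_left hπ.le (by norm_num)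
    linarith
  have hc1 : c < 1 := by
    have := Real.cos_lt_cos_of_nonneg_of_le_pi (le_refl 0)
      (show π / (2 * (g:ℝ)) ≤ π by
        rw [div_le_iff₀ hgpos]; nlinarith)
      (by positivity)
    simpa using this
  have hc2 : Real.sqrt 2 / 2 ≤ c := by
    have := Real.cos_le_cos_of_nonneg_of_le_pi (by positivity)
      (show π / 4 ≤ π by linarith) hle
    rwa [Real.cos_pi_div_four] at this
  set x := 1 + 2 * c with hxdef
  have hx1 : 1 + Real.sqrt 2 ≤ x := by simp [hxdef]; linarith
  have hx3 : x < 3 := by simp [hxdef]; linarith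
  have hxge1 : (1:ℝ) ≤ x := by linarith
  -- s = sqrt(2+2√2)
  set s := Real.sqrt (2 + 2 * Real.sqrt 2) with hsdef
  have hs0 : (0:ℝ) ≤ s := Real.sqrt_nonneg _
  have hs2 : s ^ 2 = 2 + 2 * Real.sqrt 2 := Real.sq_sqrt (by positivity)
  have hs_gt : 2 < s := by nlinarith [hs2, hr1, hs0]
  -- _root_.arcosh 3 = 2 log (1+√2)
  have e8 : Real.sqrt ((3:ℝ) ^ 2 - 1) = 2 * Real.sqrt 2 := by
    rw [show (3:ℝ) ^ 2 - 1 = 2 ^ 2 * 2 by norm_num, Real.sqrt_mul (by positivity),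
      Real.sqrt_sq (by norm_num)]
  have a3 : _root_.arcosh 3 = 2 * Real.log (1 + Real.sqrt 2) := by
    unfold _root_.arcosh
    rw [e8, show (3:ℝ) + 2 * Real.sqrt 2 = (1 + Real.sqrt 2) ^ 2 by nlinarith,
      Real.log_pow]
    norm_num
  have t1 : Real.tanh (_root_.arcosh 3 / 4) = Real.sqrt 2 / (2 + Real.sqrt 2) := by
    rw [tanh_eq2, show 2 * (_root_.arcosh 3 / 4) = Real.log (1 + Real.sqrt 2) by rw [a3]; ring,
      Real.exp_log (by positivity)]
    congr 1 <;> ring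
  -- _root_.arcosh (1+√2)
  have a2 : _root_.arcosh (1 + Real.sqrt 2) = Real.log (1 + Real.sqrt 2 + s) := by
    unfold _root_.arcosh
    rw [show (1 + Real.sqrt 2) ^ 2 - 1 = 2 + 2 * Real.sqrt 2 by nlinarith]
  have t2 : Real.tanh (_root_.arcosh (1 + Real.sqrt 2) / 2)
      = (Real.sqrt 2 + s) / (2 + Real.sqrt 2 + s) := by
    rw [tanh_eq2,
      show 2 * (_root_.arcosh (1 + Real.sqrt 2) / 2) = Real.log (1 + Real.sqrt 2 + s) by
        rw [a2]; ring,
      Real.exp_log (by positivity)]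
    congr 1 <;> ring
  -- monotonicity steps
  have step1 : Real.tanh (_root_.arcosh x / 4) < Real.tanh (_root_.arcosh 3 / 4) :=
    tanh_lt_tanh' (by linarith [_root_.arcosh_lt_arcosh hxge1 hx3])
  have step2 : Real.tanh (_root_.arcosh (1 + Real.sqrt 2) / 2) ≤ Real.tanh (_root_.arcosh x / 2) :=
    tanh_le_tanh' (by linarith [_root_.arcosh_le_arcosh (by linarith : (1:ℝ) ≤ 1 + Real.sqrt 2) hx1])
  -- cos (π/8)
  have hcos8 : Real.cos (π / 8) = Real.sqrt (2 + Real.sqrt 2) / 2 := Real.cos_pi_div_eight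
  set t := Real.sqrt (2 + Real.sqrt 2) with htdef
  have ht0 : (0:ℝ) < t := Real.sqrt_pos.2 (by positivity)
  have ht2 : t ^ 2 = 2 + Real.sqrt 2 := Real.sq_sqrt (by positivity)
  have ht_gt : 9/5 < t := by nlinarith [ht2, hr1, ht0, sq_nonneg t]
  -- the numeric middle inequality
  have mid : Real.tanh (_root_.arcosh 3 / 4) / Real.cos (π / 8)
      < Real.tanh (_root_.arcosh (1 + Real.sqrt 2) / 2) := by
    rw [t1, t2, hcos8]
    have hA : Real.sqrt 2 / (2 + Real.sqrt 2) / (t / 2) < 1 / 2 := by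
      rw [div_div, div_lt_div_iff₀ (by positivity) (by norm_num)]
      nlinarith [ht2, hr, hr1, hr15, ht_gt, ht0]
    have hB : (1:ℝ) / 2 < (Real.sqrt 2 + s) / (2 + Real.sqrt 2 + s) := by
      rw [div_lt_div_iff₀ (by norm_num) (by positivity)]
      nlinarith [hs_gt, hr1, hs0]
    linarith
  have hcospos : 0 < Real.cos (π / 8) := by rw [hcos8]; positivity
  calc Real.tanh (_root_.arcosh x / 4) / Real.cos (π / 8)
      < Real.tanh (_root_.arcosh 3 / 4) / Real.cos (π / 8) := by
        exact (div_lt_div_iff_of_pos_right hcospos).2 step1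
    _ < Real.tanh (_root_.arcosh (1 + Real.sqrt 2) / 2) := mid
    _ ≤ Real.tanh (_root_.arcosh x / 2) := step2
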